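/- arXiv:1612.05255 — 2 statements merged into one kernel-verified Lean document; each statement's English description precedes it below -/
import Mathlib

section
/- Let ξ_1,…,ξ_J be i.i.d. random vectors with i.i.d. Rademacher coordinates in {-1,1}^m, X_0 = x_0 ∈ ℝ^d fixed, and X_j = Φ(X_{j-1}, ξ_j) for measurable Φ : ℝ^{d+m} → ℝ^d. For a bounded measurable f : ℝ^d → ℝ, define q_J = f and q_{j-1}(x) = E[q_j(X_j) | X_{j-1} = x] = 2^{-m} Σ_{y∈{-1,1}^m} q_j(Φ(x,y)). Then f(X_J) = E[f(X_J)] + Σ_{j=1}^J Σ_{k∈{0,1}^m\{0}} a_{j,k}(X_{j-1}) ∏_{i=1}^m (ξ_j^i)^{k_i}, where a_{j,k}(x) = 2^{-m} Σ_{y∈{-1,1}^m} (∏_{i=1}^m y_i^{k_i}) q_j(Φ(x,y)). -/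
open MeasureTheory ProbabilityTheory Finset

lemma walsh_inner (m : ℕ) (z : Fin m → ℝ) :
    ∑ k : Fin m → Fin 2, ∏ i, (z i) ^ ((k i : ℕ)) = ∏ i, (1 + z i) := by
  rw [← Fintype.prod_sum fun i (j : Fin 2) => (z i) ^ (j : ℕ)]
  exact Finset.prod_congr rfl fun i _ => by simp [Fin.sum_univ_two]

lemma walsh_expansion (m : ℕ) (g : (Fin m → ℝ) → ℝ) (y : Fin m → ℝ)
    (hy : ∀ i, y i = -1 ∨ y i = 1) :
    ∑ k : Fin m → Fin 2, (((2:ℝ)^m)⁻¹ *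
      ∑ y' ∈ Fintype.piFinset (fun _ : Fin m => ({-1, 1} : Finset ℝ)),
        (∏ i, (y' i) ^ (k i : ℕ)) * g y') * ∏ i, (y i) ^ (k i : ℕ) = g y := by
  have hmem : y ∈ Fintype.piFinset (fun _ : Fin m => ({-1, 1} : Finset ℝ)) := by
    simp only [Fintype.mem_piFinset, Finset.mem_insert, Finset.mem_singleton]
    exact hy
  have step1 : ∑ k : Fin m → Fin 2, (((2:ℝ)^m)⁻¹ *
      ∑ y' ∈ Fintype.piFinset (fun _ : Fin m => ({-1, 1} : Finset ℝ)),
        (∏ i, (y' i) ^ (k i : ℕ)) * g y') * ∏ i, (y i) ^ (k i : ℕ)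
      = ((2:ℝ)^m)⁻¹ * ∑ y' ∈ Fintype.piFinset (fun _ : Fin m => ({-1, 1} : Finset ℝ)),
          (∏ i, (1 + y' i * y i)) * g y' := by
    simp_rw [mul_assoc, Finset.sum_mul, Finset.mul_sum]
    rw [Finset.sum_comm]
    refine Finset.sum_congr rfl fun y' _ => ?_
    rw [← Finset.mul_sum]
    congr 1
    rw [← walsh_inner m (fun i => y' i * y i), Finset.sum_mul]
    refine Finset.sum_congr rfl fun k _ => ?_
    simp_rw [mul_pow]
    rw [Finset.prod_mul_distrib]
    ring
  rw [step1]
  have step2 : ∀ y' ∈ Fintype.piFinset (fun _ : Fin m => ({-1, 1} : Finset ℝ)),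
      (∏ i, (1 + y' i * y i)) * g y'
        = (if y' = y then ((2:ℝ)^m) * g y else 0) := by
    intro y' hy'
    simp only [Fintype.mem_piFinset, Finset.mem_insert, Finset.mem_singleton] at hy'
    by_cases h : y' = y
    · subst h
      simp only [if_pos rfl]
      congr 1
      have : ∀ i, 1 + y' i * y' i = 2 := by
        intro i; rcases hy' i with h1 | h1 <;> rw [h1] <;> norm_num
      simp only [this, Finset.prod_const, Finset.card_univ, Fintype.card_fin]
    · rw [if_neg h]
      obtain ⟨i0, hi0⟩ := Function.ne_iff.mp h
      have : 1 + y' i0 * y i0 = 0 := by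
        rcases hy' i0 with h1 | h1 <;> rcases hy i0 with h2 | h2 <;>
          first | (exfalso; exact hi0 (h1.trans h2.symm)) | (rw [h1, h2]; norm_num)
      rw [Finset.prod_eq_zero (Finset.mem_univ i0) this, zero_mul]
  rw [Finset.sum_congr rfl step2, Finset.sum_ite_eq' _ y, if_pos hmem]
  rw [← mul_assoc, inv_mul_cancel₀ (by positivity), one_mul]

lemma measurable_pi_lambda' {α δ : Type*} {π : δ → Type*} (mα : MeasurableSpace α)
    [∀ a, MeasurableSpace (π a)] (f : α → ∀ a, π a)
    (hf : ∀ a, @Measurable _ _ mα _ fun c => f c a) : @Measurable _ _ mα _ f :=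
  measurable_pi_lambda f hf

/-- Discrete-time Clark–Ocone-type representation for a Markov chain
`X_j = Φ(X_{j-1}, ξ_j)` driven by i.i.d. Rademacher innovations: with `q_J = f` and
`q_{j-1}(x) = 2^{-m} ∑_{y ∈ {-1,1}^m} q_j(Φ(x,y))`, almost surely
`f(X_J) = E[f(X_J)] + ∑_{j=1}^J ∑_{k ∈ {0,1}^m \ {0}} a_{j,k}(X_{j-1}) ∏ᵢ (ξ_j^i)^{kᵢ}`,
where `a_{j,k}(x) = 2^{-m} ∑_{y ∈ {-1,1}^m} (∏ᵢ yᵢ^{kᵢ}) q_j(Φ(x,y))`. -/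
theorem clark_ocone_representation {Ω : Type*} [MeasurableSpace Ω] (μ : Measure Ω)
    [IsProbabilityMeasure μ] (J m d : ℕ) (ξ : Fin J → Fin m → Ω → ℝ)
    (hmeas : ∀ j i, Measurable (ξ j i))
    (hindep : iIndepFun (fun p : Fin J × Fin m => ξ p.1 p.2) μ)
    (hrad : ∀ j i, μ {ω | ξ j i ω = 1} = 1/2 ∧ μ {ω | ξ j i ω = -1} = 1/2)
    (Φ : (Fin d → ℝ) → (Fin m → ℝ) → (Fin d → ℝ))
    (hΦ : Measurable (Function.uncurry Φ))
    (x0 : Fin d → ℝ) (X : ℕ → Ω → (Fin d → ℝ))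
    (hX0 : ∀ ω, X 0 ω = x0)
    (hXrec : ∀ j : Fin J, ∀ ω, X ((j : ℕ) + 1) ω = Φ (X (j : ℕ) ω) (fun i => ξ j i ω))
    (f : (Fin d → ℝ) → ℝ) (hf : Measurable f) (hfbd : ∃ C, ∀ x, |f x| ≤ C)
    (q : ℕ → (Fin d → ℝ) → ℝ) (hqJ : q J = f)
    (hqrec : ∀ j : Fin J, ∀ x, q (j : ℕ) x = ((2 : ℝ) ^ m)⁻¹ *
      ∑ y ∈ Fintype.piFinset (fun _ : Fin m => ({-1, 1} : Finset ℝ)),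
        q ((j : ℕ) + 1) (Φ x y)) :
    ∀ᵐ ω ∂μ, f (X J ω)
      = (∫ ω', f (X J ω') ∂μ)
        + ∑ j : Fin J, ∑ k ∈ (Finset.univ \ {(0 : Fin m → Fin 2)}),
            (((2 : ℝ) ^ m)⁻¹ *
              ∑ y ∈ Fintype.piFinset (fun _ : Fin m => ({-1, 1} : Finset ℝ)),
                (∏ i, (y i) ^ (k i : ℕ)) * q ((j : ℕ) + 1) (Φ (X (j : ℕ) ω) y))
            * ∏ i, (ξ j i ω) ^ (k i : ℕ) := by
  classical
  obtain ⟨C, hC⟩ := hfbd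
  set H : Finset (Fin m → ℝ) := Fintype.piFinset (fun _ : Fin m => ({-1, 1} : Finset ℝ)) with hH
  -- Φ with second argument fixed is measurable
  have hΦy : ∀ y : Fin m → ℝ, Measurable (fun x => Φ x y) :=
    fun y => hΦ.comp (measurable_id.prodMk measurable_const)
  -- cardinality of the cube
  have hcard : H.card = 2 ^ m := by
    rw [hH, Fintype.card_piFinset]
    have : ({-1, 1} : Finset ℝ).card = 2 := by
      rw [Finset.card_insert_of_notMem (by norm_num), Finset.card_singleton]
    simp [this]
  -- measurability and boundedness of q j, j ≤ J
  have hqaux : ∀ n : ℕ, Measurable (q (J - n)) ∧ ∀ x, |q (J - n) x| ≤ C := by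
    intro n
    induction n with
    | zero => simpa [hqJ] using ⟨hf, hC⟩
    | succ n ih =>
      by_cases hn : J ≤ n
      · have h1 : J - (n + 1) = J - n := by omega
        rw [h1]; exact ih
      · push_neg at hn
        have hlt : J - (n + 1) < J := by omega
        have hj1 : (J - (n + 1)) + 1 = J - n := by omega
        have heq : q (J - (n + 1)) = fun x => ((2:ℝ)^m)⁻¹ * ∑ y ∈ H, q (J - n) (Φ x y) := by
          funext x
          have h2 := hqrec ⟨J - (n+1), hlt⟩ x
          simp only [] at h2
          rw [h2, hj1]
        constructor
        · rw [heq]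
          exact measurable_const.mul
            (Finset.measurable_sum H (fun y _ => ih.1.comp (hΦy y)))
        · intro x
          rw [heq, abs_mul, abs_inv, abs_pow, abs_two]
          have hsum : |∑ y ∈ H, q (J - n) (Φ x y)| ≤ (2:ℝ)^m * C := by
            calc |∑ y ∈ H, q (J - n) (Φ x y)| ≤ ∑ y ∈ H, |q (J - n) (Φ x y)| :=
                  Finset.abs_sum_le_sum_abs _ _
              _ ≤ ∑ _y ∈ H, C := Finset.sum_le_sum fun y _ => ih.2 _
              _ = (2:ℝ)^m * C := by
                  rw [Finset.sum_const, hcard, nsmul_eq_mul]; push_cast; ring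
          calc ((2:ℝ)^m)⁻¹ * |∑ y ∈ H, q (J - n) (Φ x y)|
              ≤ ((2:ℝ)^m)⁻¹ * ((2:ℝ)^m * C) := by
                apply mul_le_mul_of_nonneg_left hsum (by positivity)
            _ = C := by field_simp
  have hmeasq : ∀ j, j ≤ J → Measurable (q j) := by
    intro j hj; have := (hqaux (J - j)).1; rwa [Nat.sub_sub_self hj] at this
  have hbdq : ∀ j, j ≤ J → ∀ x, |q j x| ≤ C := by
    intro j hj; have := (hqaux (J - j)).2; rwa [Nat.sub_sub_self hj] at this
  -- measurability of X n, n ≤ J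
  have hXmeas : ∀ n, n ≤ J → Measurable (X n) := by
    intro n
    induction n with
    | zero => intro _; have : X 0 = fun _ => x0 := funext hX0; rw [this]; exact measurable_const
    | succ n ih =>
      intro hn
      have hn' : n < J := by omega
      have hXe : X (n + 1) = fun ω => Φ (X n ω) (fun i => ξ ⟨n, hn'⟩ i ω) :=
        funext (hXrec ⟨n, hn'⟩)
      rw [hXe]
      exact hΦ.comp ((ih (by omega)).prodMk
        (measurable_pi_lambda _ fun i => hmeas ⟨n, hn'⟩ i))
  -- almost surely Rademacher values
  have hae : ∀ᵐ ω ∂μ, ∀ (j : Fin J) (i : Fin m), ξ j i ω = -1 ∨ ξ j i ω = 1 := by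
    rw [MeasureTheory.ae_all_iff]
    intro j
    rw [MeasureTheory.ae_all_iff]
    intro i
    have hA : MeasurableSet {ω | ξ j i ω = 1} := hmeas j i (measurableSet_singleton 1)
    have hB : MeasurableSet {ω | ξ j i ω = -1} := hmeas j i (measurableSet_singleton (-1))
    have hdisj : Disjoint {ω | ξ j i ω = 1} {ω | ξ j i ω = -1} := by
      rw [Set.disjoint_left]
      intro ω h1 h2
      simp only [Set.mem_setOf_eq] at h1 h2
      rw [h1] at h2; norm_num at h2
    have hunion : μ ({ω | ξ j i ω = 1} ∪ {ω | ξ j i ω = -1}) = 1 := by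
      rw [measure_union hdisj hB, (hrad j i).1, (hrad j i).2]
      rw [ENNReal.div_add_div_same, one_add_one_eq_two]
      exact ENNReal.div_self (by norm_num) (by norm_num)
    have : μ ({ω | ξ j i ω = 1} ∪ {ω | ξ j i ω = -1})ᶜ = 0 := by
      rw [prob_compl_eq_zero_iff (hA.union hB)]
      exact hunion
    refine measure_mono_null ?_ this
    intro ω hω
    simp only [Set.mem_compl_iff, Set.mem_union, Set.mem_setOf_eq] at *
    tauto
  -- the law of a row
  have hrowmeas : ∀ (j : Fin J) (y : Fin m → ℝ), (∀ i, y i = -1 ∨ y i = 1) →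
      μ {ω | (fun i => ξ j i ω) = y} = ((2 : ENNReal) ^ m)⁻¹ := by
    intro j y hy
    classical
    set s : Fin J × Fin m → Set Ω := fun p => ξ p.1 p.2 ⁻¹' {y p.2} with hs
    have hset : {ω | (fun i => ξ j i ω) = y} = ⋂ i, s (j, i) := by
      ext ω
      simp only [Set.mem_setOf_eq, Set.mem_iInter, funext_iff, hs, Set.mem_preimage,
        Set.mem_singleton_iff]
    rw [hset]
    have hinj : Function.Injective (fun i : Fin m => ((j, i) : Fin J × Fin m)) := by
      intro a b hab; simpa using hab
    have hbi := hindep.meas_biInter (S := Finset.univ.image (fun i : Fin m => (j, i)))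
      (s := s) (fun p _ => ⟨{y p.2}, measurableSet_singleton _, rfl⟩)
    have hL : (⋂ p ∈ Finset.univ.image (fun i : Fin m => (j, i)), s p) = ⋂ i, s (j, i) := by
      ext ω
      simp only [Set.mem_iInter, Finset.mem_image, Finset.mem_univ, true_and]
      constructor
      · intro h i; exact h (j, i) ⟨i, rfl⟩
      · rintro h p ⟨i, rfl⟩; exact h i
    have hprod : ∏ p ∈ Finset.univ.image (fun i : Fin m => (j, i)), μ (s p)
        = ∏ i : Fin m, μ (s (j, i)) := Finset.prod_image (fun a _ b _ h => hinj h)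
    have hhalf : ∀ i : Fin m, μ (s (j, i)) = 1/2 := by
      intro i
      have hsi : s (j, i) = {ω | ξ j i ω = y i} := rfl
      rw [hsi]
      rcases hy i with h1 | h1 <;> rw [h1]
      · exact (hrad j i).2
      · exact (hrad j i).1
    rw [← hL, hbi, hprod]
    calc ∏ i : Fin m, μ (s (j, i)) = (1/2 : ENNReal) ^ m := by simp [hhalf]
      _ = ((2 : ENNReal) ^ m)⁻¹ := by rw [one_div, ENNReal.inv_pow]
  -- independence of X n from row n
  have hIndepRow : ∀ (j : Fin J), IndepFun (X (j : ℕ)) (fun ω (i : Fin m) => ξ j i ω) μ := by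
    intro j
    classical
    set S : Finset (Fin J × Fin m) := Finset.univ.filter (fun p => (p.1 : ℕ) < (j : ℕ)) with hS
    set T : Finset (Fin J × Fin m) := Finset.univ.filter (fun p => p.1 = j) with hT
    have hdisj : Disjoint S T := by
      rw [Finset.disjoint_left]
      intro p hp hq
      simp only [hS, hT, Finset.mem_filter, Finset.mem_univ, true_and] at hp hq
      rw [hq] at hp
      omega
    have h1 := hindep.indepFun_finset S T hdisj (fun p => hmeas p.1 p.2)
    -- tuple maps
    set tupS : Ω → (S → ℝ) := fun a (p : S) => ξ (p : Fin J × Fin m).1 (p : Fin J × Fin m).2 a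
      with htupS
    set tupT : Ω → (T → ℝ) := fun a (p : T) => ξ (p : Fin J × Fin m).1 (p : Fin J × Fin m).2 a
      with htupT
    -- the row is a measurable function of tupT
    have hrow : IndepFun tupS (fun ω (i : Fin m) => ξ j i ω) μ := by
      have hGmeas : Measurable (fun v : T → ℝ => fun i : Fin m =>
          v ⟨(j, i), by simp [hT]⟩) :=
        measurable_pi_lambda _ fun i => measurable_pi_apply _
      have := h1.comp measurable_id hGmeas
      exact this
    -- X n is tupS-measurable
    have hXcm : ∀ k : ℕ, k ≤ (j : ℕ) →
        Measurable[MeasurableSpace.comap tupS MeasurableSpace.pi] (X k) := by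
      intro k
      induction k with
      | zero =>
        intro _
        have : X 0 = fun _ => x0 := funext hX0
        rw [this]; exact measurable_const
      | succ k ih =>
        intro hk
        have hkJ : k < J := lt_of_lt_of_le (by omega) (le_of_lt j.2) |>.trans_le (le_refl J)
        have hkJ' : (⟨k, by omega⟩ : Fin J) = (⟨k, by omega⟩ : Fin J) := rfl
        have hXe : X (k + 1) = fun ω => Φ (X k ω) (fun i => ξ ⟨k, by omega⟩ i ω) := by
          funext ω; exact hXrec ⟨k, by omega⟩ ω
        rw [hXe]
        have htupSm : Measurable[MeasurableSpace.comap tupS MeasurableSpace.pi] tupS :=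
          Measurable.of_comap_le le_rfl
        have hξcm : ∀ i : Fin m,
            Measurable[MeasurableSpace.comap tupS MeasurableSpace.pi]
              (ξ (⟨k, by omega⟩ : Fin J) i) := by
          intro i
          have hmem : ((⟨k, by omega⟩ : Fin J), i) ∈ S := by
            simp only [hS, Finset.mem_filter, Finset.mem_univ, true_and]
            omega
          rw [measurable_iff_comap_le]
          have h2 : MeasurableSpace.comap (ξ (⟨k, by omega⟩ : Fin J) i) inferInstance
              = MeasurableSpace.comap tupS (MeasurableSpace.comap
                  (fun v : S → ℝ => v ⟨(⟨k, by omega⟩, i), hmem⟩) inferInstance) :=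
            (MeasurableSpace.comap_comp
              (f := fun v : S → ℝ => v ⟨(⟨k, by omega⟩, i), hmem⟩) (g := tupS)).symm
          rw [h2]
          exact MeasurableSpace.comap_mono
            ((measurable_pi_apply (⟨(⟨k, by omega⟩, i), hmem⟩ : S)).comap_le)
        exact hΦ.comp ((ih (by omega)).prodMk
          (measurable_pi_lambda' _ _ hξcm))
    -- conclude
    rw [ProbabilityTheory.IndepFun_iff_Indep] at hrow ⊢
    exact ProbabilityTheory.indep_of_indep_of_le_left hrow
      (Measurable.comap_le (hXcm (j : ℕ) le_rfl))
  -- one-step integral identity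
  have hstep : ∀ (j : Fin J), ∫ ω, q ((j:ℕ)+1) (X ((j:ℕ)+1) ω) ∂μ = ∫ ω, q (j:ℕ) (X (j:ℕ) ω) ∂μ := by
    intro j
    classical
    set H : Finset (Fin m → ℝ) := Fintype.piFinset (fun _ : Fin m => ({-1, 1} : Finset ℝ)) with hH
    set n : ℕ := (j : ℕ) with hn
    have hnJ : n + 1 ≤ J := j.2
    -- basic integrability helper
    have integ : ∀ (g : Ω → ℝ) (D : ℝ), Measurable g → (∀ ω, |g ω| ≤ D) → Integrable g μ := by
      intro g D hg hD
      exact (integrable_const D).mono' hg.aestronglyMeasurable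
        (Filter.Eventually.of_forall (fun ω => by simpa using hD ω))
    -- the summand functions
    set F : (Fin m → ℝ) → Ω → ℝ :=
      fun y ω => q (n+1) (Φ (X n ω) y) * (if (fun i => ξ j i ω) = y then (1:ℝ) else 0) with hF
    have hχmeas : ∀ y : Fin m → ℝ, Measurable (fun v : Fin m → ℝ => if v = y then (1:ℝ) else 0) := by
      intro y
      exact measurable_const.ite (measurableSet_singleton y) measurable_const
    have hrowm : Measurable (fun ω (i : Fin m) => ξ j i ω) :=
      measurable_pi_lambda _ fun i => hmeas j i
    have hgymeas : ∀ y, Measurable (fun ω => q (n+1) (Φ (X n ω) y)) :=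
      fun y => ((hmeasq (n+1) hnJ).comp (hΦy y)).comp (hXmeas n (by omega))
    have hFmeas : ∀ y, Measurable (F y) := by
      intro y
      exact (hgymeas y).mul ((hχmeas y).comp hrowm)
    have hFbd : ∀ y ω, |F y ω| ≤ C := by
      intro y ω
      rw [hF]
      simp only [abs_mul]
      have h1 : |q (n+1) (Φ (X n ω) y)| ≤ C := hbdq (n+1) hnJ _
      have h2 : |(if (fun i => ξ j i ω) = y then (1:ℝ) else 0)| ≤ 1 := by
        split <;> norm_num
      have hC0 : 0 ≤ C := le_trans (abs_nonneg _) h1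
      calc |q (n+1) (Φ (X n ω) y)| * |(if (fun i => ξ j i ω) = y then (1:ℝ) else 0)|
          ≤ C * 1 := mul_le_mul h1 h2 (abs_nonneg _) hC0
        _ = C := mul_one C
    have hFint : ∀ y, Integrable (F y) μ := fun y => integ _ C (hFmeas y) (hFbd y)
    -- a.e. identity
    have hAE : ∀ᵐ ω ∂μ, q (n+1) (X (n+1) ω) = ∑ y ∈ H, F y ω := by
      filter_upwards [hae] with ω hω
      have hmem : (fun i => ξ j i ω) ∈ H := by
        simp only [hH, Fintype.mem_piFinset, Finset.mem_insert, Finset.mem_singleton]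
        exact fun i => hω j i
      rw [hF]
      simp only [mul_boole]
      rw [Finset.sum_ite_eq H (fun i => ξ j i ω) (fun y => q (n+1) (Φ (X n ω) y)), if_pos hmem]
      rw [hXrec j ω]
    -- integral of the indicator
    have hind : ∀ y ∈ H, ∫ ω, (if (fun i => ξ j i ω) = y then (1:ℝ) else 0) ∂μ
        = ((2:ℝ)^m)⁻¹ := by
      intro y hy
      have hy' : ∀ i, y i = -1 ∨ y i = 1 := by
        simpa only [hH, Fintype.mem_piFinset, Finset.mem_insert, Finset.mem_singleton] using hy
      have hseteq : (fun ω => (if (fun i => ξ j i ω) = y then (1:ℝ) else 0))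
          = Set.indicator ((fun ω (i : Fin m) => ξ j i ω) ⁻¹' {y}) (fun _ => (1:ℝ)) := by
        funext ω
        simp [Set.indicator_apply, Set.mem_preimage]
      rw [hseteq, integral_indicator_const (1:ℝ) (hrowm (measurableSet_singleton y))]
      have : ((fun ω (i : Fin m) => ξ j i ω) ⁻¹' {y}) = {ω | (fun i => ξ j i ω) = y} := rfl
      rw [this, measureReal_def, hrowmeas j y hy']
      simp [ENNReal.toReal_inv, ENNReal.toReal_pow]
    -- independence factorization
    have hfact : ∀ y ∈ H, ∫ ω, F y ω ∂μ
        = (∫ ω, q (n+1) (Φ (X n ω) y) ∂μ) * ((2:ℝ)^m)⁻¹ := by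
      intro y hy
      have hchi_int : Integrable (fun ω => (if (fun i => ξ j i ω) = y then (1:ℝ) else 0)) μ := by
        refine integ _ 1 ((hχmeas y).comp hrowm) (fun ω => ?_)
        split <;> norm_num
      have hgy_int : Integrable (fun ω => q (n+1) (Φ (X n ω) y)) μ :=
        integ _ C (hgymeas y) (fun ω => hbdq (n+1) hnJ _)
      have hindep2 : IndepFun (fun ω => q (n+1) (Φ (X n ω) y))
          (fun ω => (if (fun i : Fin m => ξ j i ω) = y then (1:ℝ) else 0)) μ :=
        (hIndepRow j).comp ((hmeasq (n+1) hnJ).comp (hΦy y)) (hχmeas y)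
      have := ProbabilityTheory.IndepFun.integral_mul_eq_mul_integral hindep2 hgy_int.aestronglyMeasurable hchi_int.aestronglyMeasurable
      rw [hF]
      have hmul : (fun ω => q (n+1) (Φ (X n ω) y)
            * (if (fun i : Fin m => ξ j i ω) = y then (1:ℝ) else 0))
          = (fun ω => q (n+1) (Φ (X n ω) y))
            * (fun ω => (if (fun i : Fin m => ξ j i ω) = y then (1:ℝ) else 0)) := rfl
      rw [hmul, this, hind y hy]
    calc ∫ ω, q (n+1) (X (n+1) ω) ∂μ = ∫ ω, ∑ y ∈ H, F y ω ∂μ := integral_congr_ae hAE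
      _ = ∑ y ∈ H, ∫ ω, F y ω ∂μ := integral_finset_sum H (fun y _ => hFint y)
      _ = ∑ y ∈ H, (∫ ω, q (n+1) (Φ (X n ω) y) ∂μ) * ((2:ℝ)^m)⁻¹ :=
          Finset.sum_congr rfl hfact
      _ = ∑ y ∈ H, ∫ ω, q (n+1) (Φ (X n ω) y) * ((2:ℝ)^m)⁻¹ ∂μ := by
          refine Finset.sum_congr rfl fun y _ => ?_
          rw [integral_mul_const]
      _ = ∫ ω, ∑ y ∈ H, q (n+1) (Φ (X n ω) y) * ((2:ℝ)^m)⁻¹ ∂μ := by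
          refine (integral_finset_sum H (fun y _ => ?_)).symm
          refine integ _ (C * ((2:ℝ)^m)⁻¹) ((hgymeas y).mul_const _) (fun ω => ?_)
          rw [abs_mul]
          refine mul_le_mul (hbdq (n+1) hnJ _) (le_of_eq (abs_of_nonneg (by positivity)))
            (abs_nonneg _) ?_
          exact le_trans (abs_nonneg _) (hbdq (n+1) hnJ (Φ (X n ω) y))
      _ = ∫ ω, q n (X n ω) ∂μ := by
          refine integral_congr_ae (Filter.Eventually.of_forall fun ω => ?_)
          show ∑ y ∈ H, q (n + 1) (Φ (X n ω) y) * ((2:ℝ)^m)⁻¹ = q n (X n ω)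
          rw [← Finset.sum_mul, hqrec j (X n ω), mul_comm]
  -- expectation identity
  have hE : ∫ ω', f (X J ω') ∂μ = q 0 x0 := by
    have key : ∀ n, n ≤ J → ∫ ω, q n (X n ω) ∂μ = q 0 x0 := by
      intro n
      induction n with
      | zero =>
        intro _
        have : (fun ω => q 0 (X 0 ω)) = fun _ => q 0 x0 := by funext ω; rw [hX0]
        rw [this, integral_const, probReal_univ, one_smul]
      | succ n ih =>
        intro hn
        have hn' : n < J := by omega
        rw [hstep ⟨n, hn'⟩]
        exact ih (by omega)
    have := key J le_rfl
    rwa [hqJ] at this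
  -- pointwise algebraic identity on the good event
  filter_upwards [hae] with ω hω
  have tele : ∀ j : Fin J,
      q ((j:ℕ)+1) (X ((j:ℕ)+1) ω) - q (j:ℕ) (X (j:ℕ) ω)
        = ∑ k ∈ (Finset.univ \ {(0 : Fin m → Fin 2)}),
            (((2 : ℝ) ^ m)⁻¹ *
              ∑ y ∈ Fintype.piFinset (fun _ : Fin m => ({-1, 1} : Finset ℝ)),
                (∏ i, (y i) ^ (k i : ℕ)) * q ((j : ℕ) + 1) (Φ (X (j : ℕ) ω) y))
            * ∏ i, (ξ j i ω) ^ (k i : ℕ) := by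
    intro j
    have hw := walsh_expansion m (fun y => q ((j:ℕ)+1) (Φ (X (j:ℕ) ω) y))
      (fun i => ξ j i ω) (fun i => hω j i)
    rw [Finset.sum_eq_sum_sdiff_singleton_add (Finset.mem_univ (0 : Fin m → Fin 2))] at hw
    have h0 : (((2 : ℝ) ^ m)⁻¹ *
        ∑ y ∈ Fintype.piFinset (fun _ : Fin m => ({-1, 1} : Finset ℝ)),
          (∏ i, (y i) ^ (((0 : Fin m → Fin 2)) i : ℕ)) * q ((j : ℕ) + 1) (Φ (X (j : ℕ) ω) y))
        * ∏ i, (ξ j i ω) ^ (((0 : Fin m → Fin 2)) i : ℕ)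
        = q (j:ℕ) (X (j:ℕ) ω) := by
      have hz : ∀ i : Fin m, (((0 : Fin m → Fin 2)) i : ℕ) = 0 := fun i => rfl
      simp only [hz, pow_zero, Finset.prod_const_one, one_mul, mul_one]
      rw [hqrec j]
    rw [h0] at hw
    have hXj : q ((j:ℕ)+1) (Φ (X (j:ℕ) ω) (fun i => ξ j i ω)) = q ((j:ℕ)+1) (X ((j:ℕ)+1) ω) := by
      rw [hXrec j ω]
    rw [hXj] at hw
    linarith
  have sumtele : ∑ j : Fin J,
      (q ((j:ℕ)+1) (X ((j:ℕ)+1) ω) - q (j:ℕ) (X (j:ℕ) ω)) = f (X J ω) - q 0 x0 := by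
    rw [Fin.sum_univ_eq_sum_range (fun n => q (n+1) (X (n+1) ω) - q n (X n ω)) J]
    rw [Finset.sum_range_sub (fun n => q n (X n ω))]
    rw [hqJ, hX0]
  rw [hE]
  have : ∑ j : Fin J, ∑ k ∈ (Finset.univ \ {(0 : Fin m → Fin 2)}),
            (((2 : ℝ) ^ m)⁻¹ *
              ∑ y ∈ Fintype.piFinset (fun _ : Fin m => ({-1, 1} : Finset ℝ)),
                (∏ i, (y i) ^ (k i : ℕ)) * q ((j : ℕ) + 1) (Φ (X (j : ℕ) ω) y))
            * ∏ i, (ξ j i ω) ^ (k i : ℕ)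
      = f (X J ω) - q 0 x0 := by
    rw [← sumtele]
    exact (Finset.sum_congr rfl fun j _ => (tele j).symm)
  rw [this]
  ring
end

section
/- With c_m = 3^m 2^{m(m-1)/2}, p_m(y) = 4^{#{i:y_i=0}}/(6^m 2^{m(m-1)/2}), 𝓤 the set of pairs (o,r) ∈ {0,1,2}^m × {0,1}^𝓘 not both zero, and C_{m,o} = Σ_{y∈{-√3,0,√3}^m} c_m 2^{m(m-1)/2} [p_m(y) ∏_i H_{o_i}(y_i)]², it holds that Σ_{(o,r)∈𝓤} C_{m,o} = c_m − (3/2)^m. -/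
open Finset

/-- The index set `𝓘 = {(k,l) : 1 ≤ k < l ≤ m}`. -/
abbrev pairIdx (m : ℕ) := {p : Fin m × Fin m // p.1 < p.2}

/-- The first three normalized Hermite polynomials. -/
noncomputable def hermiteH : Fin 3 → ℝ → ℝ
  | 0 => fun _ => 1
  | 1 => fun x => x
  | 2 => fun x => (x ^ 2 - 1) / Real.sqrt 2

lemma card_pairIdx (m : ℕ) : Fintype.card (pairIdx m) = m * (m - 1) / 2 := by
  have e : pairIdx m ≃ (Σ j : Fin m, Fin j.val) := {
    toFun := fun p => ⟨p.1.2, ⟨p.1.1, p.2⟩⟩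
    invFun := fun q => ⟨(q.2.castLT (q.2.isLt.trans q.1.isLt), q.1), q.2.isLt⟩
    left_inv := fun p => rfl
    right_inv := fun q => rfl }
  rw [Fintype.card_congr e, Fintype.card_sigma]
  simp only [Fintype.card_fin]
  rw [show (∑ x : Fin m, (x:ℕ)) = ∑ i ∈ Finset.range m, i from
    Fin.sum_univ_eq_sum_range (fun i => i) m, Finset.sum_range_id]

noncomputable def fval : Fin 3 → ℝ
  | 0 => 3/2
  | 1 => 1/2
  | 2 => 1

lemma coord_sum (k : Fin 3) :
    ∑ t ∈ ({-Real.sqrt 3, 0, Real.sqrt 3} : Finset ℝ),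
      (1/12 : ℝ) * ((if t = 0 then (4:ℝ) else 1) * hermiteH k t) ^ 2 = fval k := by
  have h3 : Real.sqrt 3 ≠ 0 := by positivity
  have hne1 : -Real.sqrt 3 ≠ 0 := by simpa using h3
  have hne2 : -Real.sqrt 3 ≠ Real.sqrt 3 := by
    intro h
    have : Real.sqrt 3 = 0 := by linarith [h]
    exact h3 this
  have hmem1 : -Real.sqrt 3 ∉ ({0, Real.sqrt 3} : Finset ℝ) := by
    simp [hne1, hne2]
  have hmem2 : (0:ℝ) ∉ ({Real.sqrt 3} : Finset ℝ) := by simp [Ne.symm h3]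
  have hsq : Real.sqrt 3 ^ 2 = 3 := Real.sq_sqrt (by norm_num)
  have hsq2 : Real.sqrt 2 ^ 2 = 2 := Real.sq_sqrt (by norm_num)
  have hs2 : Real.sqrt 2 ≠ 0 := by positivity
  rw [show ({-Real.sqrt 3, 0, Real.sqrt 3} : Finset ℝ)
      = insert (-Real.sqrt 3) (insert 0 {Real.sqrt 3}) from rfl,
    Finset.sum_insert hmem1, Finset.sum_insert hmem2, Finset.sum_singleton]
  fin_cases k <;>
    simp only [hermiteH, fval, if_pos rfl, if_neg hne1, if_neg (Ne.symm h3), if_neg h3, ↓reduceIte] <;>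
    field_simp <;> ring_nf <;>
    simp only [hsq, hsq2, show Real.sqrt 3 ^ 4 = 9 by nlinarith [hsq]] <;> ring_nf

lemma inner_eq (m : ℕ) (o : Fin m → Fin 3) :
    ∑ y ∈ Fintype.piFinset (fun _ : Fin m => ({-Real.sqrt 3, 0, Real.sqrt 3} : Finset ℝ)),
        ((3 : ℝ) ^ m * (2 : ℝ) ^ (m * (m - 1) / 2)) * (2 : ℝ) ^ (m * (m - 1) / 2) *
          (((4 : ℝ) ^ (Finset.univ.filter (fun i => y i = 0)).card
              / ((6 : ℝ) ^ m * (2 : ℝ) ^ (m * (m - 1) / 2)))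
            * ∏ i, hermiteH (o i) (y i)) ^ 2
      = ∏ i, fval (o i) := by
  set P := m * (m - 1) / 2 with hP
  have key : ∀ y ∈ Fintype.piFinset (fun _ : Fin m => ({-Real.sqrt 3, 0, Real.sqrt 3} : Finset ℝ)),
      ((3 : ℝ) ^ m * (2 : ℝ) ^ P) * (2 : ℝ) ^ P *
          (((4 : ℝ) ^ (Finset.univ.filter (fun i => y i = 0)).card
              / ((6 : ℝ) ^ m * (2 : ℝ) ^ P))
            * ∏ i, hermiteH (o i) (y i)) ^ 2
      = ∏ i, (1/12 : ℝ) * ((if y i = 0 then (4:ℝ) else 1) * hermiteH (o i) (y i)) ^ 2 := by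
    intro y _
    have h4 : (4 : ℝ) ^ (Finset.univ.filter (fun i => y i = 0)).card
        = ∏ i, (if y i = 0 then (4:ℝ) else 1) := by
      rw [← Finset.prod_const, Finset.prod_filter]
    rw [h4]
    rw [show (∏ i, (1/12 : ℝ) * ((if y i = 0 then (4:ℝ) else 1) * hermiteH (o i) (y i)) ^ 2)
        = (1/12 : ℝ)^m * ((∏ i, (if y i = 0 then (4:ℝ) else 1)) * ∏ i, hermiteH (o i) (y i)) ^ 2 by
      rw [Finset.prod_mul_distrib, Finset.prod_const, Finset.card_univ, Fintype.card_fin,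
        mul_pow, ← Finset.prod_pow, ← Finset.prod_pow, ← Finset.prod_mul_distrib]
      ring_nf]
    have h2 : (2:ℝ)^P ≠ 0 := by positivity
    have h6 : (6:ℝ)^m ≠ 0 := by positivity
    have h12 : (12:ℝ)^m = 2^m * 2^m * 3^m := by
      rw [← mul_pow, ← mul_pow]; norm_num
    have h6' : (6:ℝ)^m = 2^m * 3^m := by rw [← mul_pow]; norm_num
    field_simp
    rw [one_div_pow, h6']
    field_simp
    rw [h12]
    ring
  rw [Finset.sum_congr rfl key,
    ← Finset.prod_univ_sum (fun _ : Fin m => ({-Real.sqrt 3, 0, Real.sqrt 3} : Finset ℝ))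
      (fun i t => (1/12 : ℝ) * ((if t = 0 then (4:ℝ) else 1) * hermiteH (o i) t) ^ 2)]
  exact Finset.prod_congr rfl fun i _ => coord_sum (o i)

/-- With `c_m = 3^m 2^{m(m-1)/2}`, `p_m(y) = 4^{#{i : yᵢ = 0}}/(6^m 2^{m(m-1)/2})`,
`𝓤` the set of pairs `(o,r) ∈ {0,1,2}^m × {0,1}^𝓘` not both zero, and
`C_{m,o} = ∑_{y ∈ {-√3,0,√3}^m} c_m 2^{m(m-1)/2} [p_m(y) ∏ᵢ H_{oᵢ}(yᵢ)]²`,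
one has `∑_{(o,r) ∈ 𝓤} C_{m,o} = c_m − (3/2)^m`. -/
theorem sum_Cmo_over_U (m : ℕ) (hm : 1 ≤ m) :
    ∑ p ∈ ((Finset.univ : Finset ((Fin m → Fin 3) × (pairIdx m → Fin 2)))
        \ {((0 : Fin m → Fin 3), (0 : pairIdx m → Fin 2))}),
      (∑ y ∈ Fintype.piFinset (fun _ : Fin m => ({-Real.sqrt 3, 0, Real.sqrt 3} : Finset ℝ)),
        ((3 : ℝ) ^ m * (2 : ℝ) ^ (m * (m - 1) / 2)) * (2 : ℝ) ^ (m * (m - 1) / 2) *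
          (((4 : ℝ) ^ (Finset.univ.filter (fun i => y i = 0)).card
              / ((6 : ℝ) ^ m * (2 : ℝ) ^ (m * (m - 1) / 2)))
            * ∏ i, hermiteH (p.1 i) (y i)) ^ 2)
      = (3 : ℝ) ^ m * (2 : ℝ) ^ (m * (m - 1) / 2) - (3 / 2 : ℝ) ^ m := by
  rw [Finset.sum_sdiff_eq_sub (by simp)]
  simp only [inner_eq m]
  rw [Finset.sum_singleton, Fintype.sum_prod_type]
  simp only [Finset.sum_const, Finset.card_univ, nsmul_eq_mul]
  have hcard : (Fintype.card (pairIdx m → Fin 2) : ℝ) = 2 ^ (m * (m-1) / 2) := by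
    rw [Fintype.card_fun, Fintype.card_fin, card_pairIdx]
    push_cast
    rfl
  have houter : ∑ o : Fin m → Fin 3, ∏ i, fval (o i) = (3:ℝ)^m := by
    rw [← Fintype.piFinset_univ,
      ← Finset.prod_univ_sum (fun _ : Fin m => (Finset.univ : Finset (Fin 3)))
        (fun _ k => fval k)]
    have h3 : ∑ j : Fin 3, fval j = 3 := by
      rw [Fin.sum_univ_three]; norm_num [fval]
    simp only [h3, Finset.prod_const, Finset.card_univ, Fintype.card_fin]
  rw [← Finset.mul_sum, houter, hcard]
  simp only [Pi.zero_apply]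
  rw [Finset.prod_const, Finset.card_univ, Fintype.card_fin]
  norm_num [fval]
  ring
end
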